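/- Let T be a tournament whose minimum feedback arc set has size k, and let (u,v) be an arc of T contained in more than 2k directed triangles. Then every minimum feedback arc set of T contains the arc (u,v). -/

import Mathlib

def backCost {V : Type*} [Fintype V] (r : V → V → Prop) [DecidableRel r]
    (π : V ≃ Fin (Fintype.card V)) : ℕ :=
  (Finset.univ.filter (fun uv : V × V => r uv.1 uv.2 ∧ π uv.2 < π uv.1)).card

/-- If the arc `(u,v)` lies in more than `2k` directed triangles, where `k` is the
minimum feedback arc set size, then every optimal ranking pays for `(u,v)`,
i.e. places `v` before `u`. -/
theorem stmt18 {V : Type*} [Fintype V] (r : V → V → Prop) [DecidableRel r]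
    (hirr : ∀ u : V, ¬ r u u)
    (htot : ∀ u w : V, u ≠ w → (r u w ↔ ¬ r w u))
    (u v : V) (huv : r u v)
    (π : V ≃ Fin (Fintype.card V))
    (hmin : ∀ π' : V ≃ Fin (Fintype.card V), backCost r π ≤ backCost r π')
    (htri : 2 * backCost r π
      < (Finset.univ.filter (fun w : V => r v w ∧ r w u)).card) :
    ∀ π' : V ≃ Fin (Fintype.card V),
      (∀ π'' : V ≃ Fin (Fintype.card V), backCost r π' ≤ backCost r π'') →
      π' v < π' u := by
  intro π' hopt
  by_contra hcon
  have hne : u ≠ v := fun h => hirr u (h ▸ huv)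
  have hπne : π' u ≠ π' v := fun h => hne (π'.injective h)
  have huv' : π' u < π' v := by
    rcases lt_trichotomy (π' u) (π' v) with h | h | h
    · exact h
    · exact absurd h hπne
    · exact absurd h hcon
  have hnvu : ¬ r v u := by
    have := (htot u v hne).mp huv
    intro h; exact this h
  -- map each triangle vertex to a back arc of π'
  set T := Finset.univ.filter (fun w : V => r v w ∧ r w u) with hT
  set B := Finset.univ.filter (fun uv : V × V => r uv.1 uv.2 ∧ π' uv.2 < π' uv.1) with hB
  have hcard : T.card ≤ B.card := by
    apply Finset.card_le_card_of_injOn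
      (fun w => if π' w < π' v then (v, w) else (w, u))
    · intro w hw
      simp only [hT, Finset.mem_coe, Finset.mem_filter] at hw
      obtain ⟨-, hvw, hwu⟩ := hw
      by_cases h : π' w < π' v
      · simp only [if_pos h, hB, Finset.mem_coe, Finset.mem_filter]
        exact ⟨Finset.mem_univ _, hvw, h⟩
      · simp only [if_neg h, hB, Finset.mem_coe, Finset.mem_filter]
        have hwv : w ≠ v := fun he => hirr v (he ▸ hvw)
        have : π' v < π' w :=
          lt_of_le_of_ne (not_lt.mp h) (fun he => hwv (π'.injective he.symm))
        exact ⟨Finset.mem_univ _, hwu, huv'.trans this⟩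
    · intro w1 hw1 w2 hw2 heq
      obtain ⟨hvw1, hw1u⟩ := (Finset.mem_filter.mp hw1).2
      obtain ⟨hvw2, hw2u⟩ := (Finset.mem_filter.mp hw2).2
      simp only [] at heq
      by_cases h1 : π' w1 < π' v <;> by_cases h2 : π' w2 < π' v
      · rw [if_pos h1, if_pos h2, Prod.mk.injEq] at heq
        exact heq.2
      · rw [if_pos h1, if_neg h2, Prod.mk.injEq] at heq
        exact absurd (heq.2 ▸ hvw1) hnvu
      · rw [if_neg h1, if_pos h2, Prod.mk.injEq] at heq
        exact absurd (heq.2.symm ▸ hvw2) hnvu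
      · rw [if_neg h1, if_neg h2, Prod.mk.injEq] at heq
        exact heq.1
  have h1 : backCost r π' ≤ backCost r π := hopt π
  have h2 : backCost r π' = B.card := rfl
  omega
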